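/- For any graph G obtained by splitting a vertex v (with neighborhood covering U₁ ∪ U₂ = N(v)) and then deleting an edge incident to one of the resulting split vertices, the same graph (up to isomorphism fixing all other vertices) can be obtained by first deleting an edge of G (or doing nothing) and then performing a vertex split of v with an appropriately modified covering. -/
import Mathlib


/-- The relation underlying an inclusive vertex split of `v` with covering `U₁, U₂`
of `N(v)`.  The split vertices are `v₁ = some v` and `v₂ = none`; every other vertex
`x` of `G` is represented by `some x`. -/
def splitRel {V : Type*} (G : SimpleGraph V) (v : V) (U₁ U₂ : Set V) :
    Option V → Option V → Prop
  | some x, some y => (x ≠ v ∧ y ≠ v ∧ G.Adj x y) ∨ (x = v ∧ y ∈ U₁)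
  | none, some y => y ∈ U₂
  | _, _ => False

/-- The graph obtained from `G` by an inclusive vertex split of `v` with covering
`U₁ ∪ U₂ = N(v)`: remove `v` and add two new non-adjacent vertices `v₁ = some v`
and `v₂ = none` with `N(v₁) = U₁` and `N(v₂) = U₂`. -/
def splitGraph {V : Type*} (G : SimpleGraph V) (v : V) (U₁ U₂ : Set V) :
    SimpleGraph (Option V) :=
  SimpleGraph.fromRel (splitRel G v U₁ U₂)

/-- A vertex split of `v` followed by the deletion of an edge `u w` incident to one of
the resulting split vertices `w` (so `w = some v` with `u ∈ U₁`, or `w = none` with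
`u ∈ U₂`) yields the same graph as first deleting an edge of `G` (or doing nothing)
and then splitting `v` with an appropriately modified covering. -/
theorem split_then_delete_swap {V : Type*} (G : SimpleGraph V) (v u : V)
    (U₁ U₂ : Set V) (hcov : U₁ ∪ U₂ = G.neighborSet v) (w : Option V)
    (hw : (w = some v ∧ u ∈ U₁) ∨ (w = none ∧ u ∈ U₂)) :
    ∃ (H : SimpleGraph V) (U₁' U₂' : Set V),
      (H = G ∨ H = G.deleteEdges {s(u, v)}) ∧
      U₁' ∪ U₂' = H.neighborSet v ∧
      (splitGraph G v U₁ U₂).deleteEdges {s(some u, w)} = splitGraph H v U₁' U₂' := by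
  have hU1 : U₁ ⊆ G.neighborSet v := hcov ▸ Set.subset_union_left
  have hU2 : U₂ ⊆ G.neighborSet v := hcov ▸ Set.subset_union_right
  rcases hw with ⟨rfl, hu⟩ | ⟨rfl, hu⟩
  · -- w = some v, u ∈ U₁
    have huv : u ≠ v := (hU1 hu).ne'
    by_cases hu2 : u ∈ U₂
    · refine ⟨G, U₁ \ {u}, U₂, Or.inl rfl, ?_, ?_⟩
      · rw [← hcov]; ext x
        by_cases hx : x = u <;> simp [hx, hu2] <;> tauto
      · ext a b
        cases a <;> cases b <;>
          simp only [splitGraph, splitRel, SimpleGraph.deleteEdges_adj, Sym2.eq_iff,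
            SimpleGraph.fromRel_adj, Set.mem_singleton_iff, Set.mem_diff, ne_eq,
            Option.some.injEq, reduceCtorEq, not_false_eq_true, true_and, and_true,
            false_and, and_false, or_false, false_or, not_or]
        aesop
    · refine ⟨G.deleteEdges {s(u, v)}, U₁ \ {u}, U₂, Or.inr rfl, ?_, ?_⟩
      · ext x
        have hmx : x ∈ U₁ ∨ x ∈ U₂ ↔ G.Adj v x := by
          rw [← SimpleGraph.mem_neighborSet, ← hcov]; simp
        by_cases hx : x = u <;>
          simp [hx, hu2, SimpleGraph.deleteEdges_adj, Sym2.eq_iff, huv, huv.symm,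
            SimpleGraph.mem_neighborSet] <;> tauto
      · ext a b
        cases a <;> cases b <;>
          simp only [splitGraph, splitRel, SimpleGraph.deleteEdges_adj, Sym2.eq_iff,
            SimpleGraph.fromRel_adj, Set.mem_singleton_iff, Set.mem_diff, ne_eq,
            Option.some.injEq, reduceCtorEq, not_false_eq_true, true_and, and_true,
            false_and, and_false, or_false, false_or, not_or]
        aesop
  · -- w = none, u ∈ U₂
    have huv : u ≠ v := (hU2 hu).ne'
    by_cases hu1 : u ∈ U₁
    · refine ⟨G, U₁, U₂ \ {u}, Or.inl rfl, ?_, ?_⟩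
      · rw [← hcov]; ext x
        by_cases hx : x = u <;> simp [hx, hu1] <;> tauto
      · ext a b
        cases a <;> cases b <;>
          simp only [splitGraph, splitRel, SimpleGraph.deleteEdges_adj, Sym2.eq_iff,
            SimpleGraph.fromRel_adj, Set.mem_singleton_iff, Set.mem_diff, ne_eq,
            Option.some.injEq, reduceCtorEq, not_false_eq_true, true_and, and_true,
            false_and, and_false, or_false, false_or, not_or] <;>
        aesop
    · refine ⟨G.deleteEdges {s(u, v)}, U₁, U₂ \ {u}, Or.inr rfl, ?_, ?_⟩
      · ext x
        have hmx : x ∈ U₁ ∨ x ∈ U₂ ↔ G.Adj v x := by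
          rw [← SimpleGraph.mem_neighborSet, ← hcov]; simp
        by_cases hx : x = u <;>
          simp [hx, hu1, SimpleGraph.deleteEdges_adj, Sym2.eq_iff, huv, huv.symm,
            SimpleGraph.mem_neighborSet] <;> tauto
      · ext a b
        cases a <;> cases b <;>
          simp only [splitGraph, splitRel, SimpleGraph.deleteEdges_adj, Sym2.eq_iff,
            SimpleGraph.fromRel_adj, Set.mem_singleton_iff, Set.mem_diff, ne_eq,
            Option.some.injEq, reduceCtorEq, not_false_eq_true, true_and, and_true,
            false_and, and_false, or_false, false_or, not_or] <;>
        aesop
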